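/- Let n be a natural number and let G be a simple graph on 2n vertices in which every vertex has degree n−1 and which is not isomorphic to the disjoint union K_n ⊔ K_n. Then G is 2-connected: G is connected, has at least 3 vertices, and the graph obtained by deleting any single vertex of G is connected. -/

import Mathlib

open SimpleGraph

/-- The disjoint union of cliques `K_m ⊔ K_n`. -/
def cliqueSum (m n : ℕ) : SimpleGraph (Fin m ⊕ Fin n) :=
  (⊤ : SimpleGraph (Fin m)) ⊕g (⊤ : SimpleGraph (Fin n))

/-- The degree multiset of a finite simple graph. -/
def degreeMultiset {V : Type} [Fintype V] (G : SimpleGraph V) [DecidableRel G.Adj] :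
    Multiset ℕ :=
  Finset.univ.val.map fun v => G.degree v

/-- Membership in the class `G_{m,n}`: a graph on `m + n` vertices whose degree multiset
equals that of `K_m ⊔ K_n` and which is not isomorphic to `K_m ⊔ K_n`. -/
def MemGmn (m n : ℕ) {V : Type} [Fintype V] (G : SimpleGraph V) [DecidableRel G.Adj] : Prop :=
  Fintype.card V = m + n ∧
  degreeMultiset G = Multiset.replicate m (m - 1) + Multiset.replicate n (n - 1) ∧
  IsEmpty (G ≃g cliqueSum m n)

open Finset in
lemma key {n : ℕ} {V : Type} [Fintype V] (G : SimpleGraph V) [DecidableRel G.Adj]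
    (hcard : Fintype.card V = 2 * n) (hdeg : ∀ v, G.degree v = n - 1)
    (S : Finset V) (hS : S.card = n)
    (hclosed : ∀ a ∈ S, ∀ b, G.Adj a b → b ∈ S) :
    Nonempty (G ≃g cliqueSum n n) := by
  classical
  have hclosed' : ∀ a ∉ S, ∀ b, G.Adj a b → b ∉ S := by
    intro a ha b hab hb
    exact ha (hclosed b hb a hab.symm)
  have hnbr : ∀ a ∈ S, G.neighborFinset a = S.erase a := by
    intro a ha
    apply Finset.eq_of_subset_of_card_le
    · intro x hx
      rw [mem_neighborFinset] at hx
      exact Finset.mem_erase.2 ⟨(G.ne_of_adj hx).symm, hclosed a ha x hx⟩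
    · rw [Finset.card_erase_of_mem ha, hS, G.card_neighborFinset_eq_degree, hdeg]
  have hScompl : Sᶜ.card = n := by
    rw [Finset.card_compl, hS, hcard]; omega
  have hnbr' : ∀ a ∉ S, G.neighborFinset a = Sᶜ.erase a := by
    intro a ha
    apply Finset.eq_of_subset_of_card_le
    · intro x hx
      rw [mem_neighborFinset] at hx
      exact Finset.mem_erase.2 ⟨(G.ne_of_adj hx).symm,
        Finset.mem_compl.2 (hclosed' a ha x hx)⟩
    · rw [Finset.card_erase_of_mem (Finset.mem_compl.2 ha), hScompl,
        G.card_neighborFinset_eq_degree, hdeg]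
  have hadj : ∀ a b : V, G.Adj a b ↔ a ≠ b ∧ ((a ∈ S) ↔ (b ∈ S)) := by
    intro a b
    constructor
    · intro h
      refine ⟨G.ne_of_adj h, ?_⟩
      exact ⟨fun ha => hclosed a ha b h, fun hb => hclosed b hb a h.symm⟩
    · rintro ⟨hne, hiff⟩
      by_cases ha : a ∈ S
      · have hb := hiff.1 ha
        have : b ∈ G.neighborFinset a := by
          rw [hnbr a ha]; exact Finset.mem_erase.2 ⟨hne.symm, hb⟩
        rwa [mem_neighborFinset] at this
      · have hb : b ∉ S := fun hb => ha (hiff.2 hb)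
        have : b ∈ G.neighborFinset a := by
          rw [hnbr' a ha]; exact Finset.mem_erase.2 ⟨hne.symm, Finset.mem_compl.2 hb⟩
        rwa [mem_neighborFinset] at this
  have h1 : Fintype.card {x // x ∈ S} = n := by rw [Fintype.card_coe]; exact hS
  have h2 : Fintype.card {x // x ∉ S} = n := by
    rw [Fintype.card_subtype_compl, h1, hcard]; omega
  let e1 := Fintype.equivFinOfCardEq h1
  let e2 := Fintype.equivFinOfCardEq h2
  let e : V ≃ (Fin n ⊕ Fin n) :=
    (Equiv.sumCompl (· ∈ S)).symm.trans (Equiv.sumCongr e1 e2)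
  have hpos : ∀ (x : V) (hx : x ∈ S), e x = Sum.inl (e1 ⟨x, hx⟩) := by
    intro x hx
    simp [e, Equiv.sumCompl_symm_apply_of_pos hx]
  have hneg : ∀ (x : V) (hx : x ∉ S), e x = Sum.inr (e2 ⟨x, hx⟩) := by
    intro x hx
    simp [e, Equiv.sumCompl_symm_apply_of_neg hx]
  refine ⟨⟨e, ?_⟩⟩
  intro a b
  show (cliqueSum n n).Adj (e a) (e b) ↔ G.Adj a b
  rw [hadj]
  by_cases ha : a ∈ S <;> by_cases hb : b ∈ S
  · rw [hpos a ha, hpos b hb]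
    simp [cliqueSum, ha, hb, e1.apply_eq_iff_eq, Subtype.ext_iff, Ne, eq_comm]
  · rw [hpos a ha, hneg b hb]
    simp [cliqueSum, ha, hb]
  · rw [hneg a ha, hpos b hb]
    simp [cliqueSum, ha, hb]
  · rw [hneg a ha, hneg b hb]
    simp [cliqueSum, ha, hb, e2.apply_eq_iff_eq, Subtype.ext_iff, Ne, eq_comm]

open Finset in
lemma key2 {n : ℕ} {V : Type} [Fintype V] (G : SimpleGraph V) [DecidableRel G.Adj]
    (hcard : Fintype.card V = 2 * n) (hdeg : ∀ v, G.degree v = n - 1)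
    (hn : 1 ≤ n) (v : V) (B : Finset V) (hvB : v ∉ B) (hB : B.card = n - 1)
    (hclosed : ∀ a ∈ B, ∀ b, G.Adj a b → b = v ∨ b ∈ B) :
    Nonempty (G ≃g cliqueSum n n) := by
  classical
  have hins : (insert v B).card = n := by
    rw [Finset.card_insert_of_notMem hvB, hB]; omega
  have hnbr : ∀ a ∈ B, G.neighborFinset a = (insert v B).erase a := by
    intro a ha
    apply Finset.eq_of_subset_of_card_le
    · intro x hx
      rw [mem_neighborFinset] at hx
      refine Finset.mem_erase.2 ⟨(G.ne_of_adj hx).symm, ?_⟩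
      rcases hclosed a ha x hx with h | h
      · exact h ▸ Finset.mem_insert_self v B
      · exact Finset.mem_insert_of_mem h
    · rw [Finset.card_erase_of_mem (Finset.mem_insert_of_mem ha), hins,
        G.card_neighborFinset_eq_degree, hdeg]
  have hvnbr : G.neighborFinset v = B := by
    apply (Finset.eq_of_subset_of_card_le ?_ ?_).symm
    · intro b hb
      rw [mem_neighborFinset]
      have : v ∈ G.neighborFinset b := by
        rw [hnbr b hb]
        exact Finset.mem_erase.2 ⟨fun h => hvB (h ▸ hb), Finset.mem_insert_self v B⟩
      rw [mem_neighborFinset] at this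
      exact this.symm
    · rw [hB, G.card_neighborFinset_eq_degree, hdeg]
  refine key G hcard hdeg (insert v B) hins ?_
  intro a ha b hab
  rcases Finset.mem_insert.1 ha with rfl | haB
  · have : b ∈ G.neighborFinset a := (mem_neighborFinset _ _ _).2 hab
    rw [hvnbr] at this
    exact Finset.mem_insert_of_mem this
  · have : b ∈ G.neighborFinset a := (mem_neighborFinset _ _ _).2 hab
    rw [hnbr a haB] at this
    exact Finset.mem_of_mem_erase this

theorem stmt_3 (n : ℕ) {V : Type} [Fintype V] (G : SimpleGraph V) [DecidableRel G.Adj]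
    (hcard : Fintype.card V = 2 * n)
    (hdeg : ∀ v : V, G.degree v = n - 1)
    (hnotiso : IsEmpty (G ≃g cliqueSum n n)) :
    G.Connected ∧ 3 ≤ Fintype.card V ∧
      ∀ v : V, (G.induce ({v}ᶜ : Set V)).Connected := by
  classical
  -- rule out n = 0
  rcases Nat.eq_zero_or_pos n with rfl | hn1
  · exact ((key G hcard hdeg ∅ rfl (by simp)).elim hnotiso.false).elim
  -- connectivity
  have hconn : G.Connected := by
    rw [connected_iff]
    have hne : Nonempty V := by
      rw [← Fintype.card_pos_iff, hcard]; omega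
    refine ⟨?_, hne⟩
    by_contra hpc
    rw [Preconnected] at hpc
    push_neg at hpc
    obtain ⟨u, w, hR⟩ := hpc
    set S : Finset V := Finset.univ.filter (fun x => G.Reachable u x) with hSdef
    have hmemS : ∀ x, x ∈ S ↔ G.Reachable u x := by
      intro x; simp [hSdef]
    have hclosed : ∀ a ∈ S, ∀ b, G.Adj a b → b ∈ S := by
      intro a ha b hab
      exact (hmemS b).2 (((hmemS a).1 ha).trans hab.reachable)
    have hSlb : ∀ x ∈ S, n ≤ S.card := by
      intro x hx
      have hsub : insert x (G.neighborFinset x) ⊆ S := by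
        intro y hy
        rcases Finset.mem_insert.1 hy with rfl | hy
        · exact hx
        · exact hclosed x hx y ((mem_neighborFinset _ _ _).1 hy)
      have := Finset.card_le_card hsub
      rw [Finset.card_insert_of_notMem (G.notMem_neighborFinset_self x),
        G.card_neighborFinset_eq_degree, hdeg] at this
      omega
    have hSclb : ∀ x ∈ Sᶜ, n ≤ Sᶜ.card := by
      intro x hx
      have hclosed' : ∀ a ∈ Sᶜ, ∀ b, G.Adj a b → b ∈ Sᶜ := by
        intro a ha b hab
        rw [Finset.mem_compl] at ha ⊢
        exact fun hb => ha (hclosed b hb a hab.symm)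
      have hsub : insert x (G.neighborFinset x) ⊆ Sᶜ := by
        intro y hy
        rcases Finset.mem_insert.1 hy with rfl | hy
        · exact hx
        · exact hclosed' x hx y ((mem_neighborFinset _ _ _).1 hy)
      have := Finset.card_le_card hsub
      rw [Finset.card_insert_of_notMem (G.notMem_neighborFinset_self x),
        G.card_neighborFinset_eq_degree, hdeg] at this
      omega
    have huS : u ∈ S := (hmemS u).2 (Reachable.refl u)
    have hwS : w ∈ Sᶜ := Finset.mem_compl.2 (fun h => hR ((hmemS w).1 h))
    have hsum : S.card + Sᶜ.card = 2 * n := by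
      rw [Finset.card_add_card_compl, hcard]
    have hScard : S.card = n := by
      have h1 := hSlb u huS
      have h2 := hSclb w hwS
      omega
    exact (key G hcard hdeg S hScard hclosed).elim hnotiso.false
  -- rule out n = 1
  rcases Nat.lt_or_ge n 2 with hn2 | hn2
  · interval_cases n
    exfalso
    have h2 : 1 < Fintype.card V := by omega
    obtain ⟨u, w, huw⟩ := Fintype.exists_pair_of_one_lt_card h2
    obtain ⟨p⟩ := hconn.preconnected u w
    cases p with
    | nil => exact huw rfl
    | cons h q =>
      have : _ ∈ G.neighborFinset u := (mem_neighborFinset _ _ _).2 h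
      have hd := hdeg u
      rw [← G.card_neighborFinset_eq_degree] at hd
      simp only [Nat.sub_self] at hd
      rw [Finset.card_eq_zero] at hd
      rw [hd] at this
      exact absurd this (Finset.notMem_empty _)
  refine ⟨hconn, by omega, ?_⟩
  -- vertex deletion
  intro v
  by_contra hC
  set W := ({v}ᶜ : Set V)
  set G' : SimpleGraph W := G.induce W with hG'
  have hWmem : ∀ x : V, x ∈ W ↔ x ≠ v := by intro x; simp [W]
  have hWcard : Fintype.card W = 2 * n - 1 := by
    have : Fintype.card W = Fintype.card V - 1 := by
      have h : Fintype.card ({v}ᶜ : Set V) = Fintype.card V - Fintype.card ({v} : Set V) :=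
        Fintype.card_compl_set _
      simp only [Set.card_singleton] at h
      simpa [W] using h
    omega
  rw [connected_iff] at hC
  push_neg at hC
  have hWne : Nonempty W := by
    rw [← Fintype.card_pos_iff, hWcard]; omega
  have hpc : ¬ G'.Preconnected := fun h => (not_isEmpty_iff.2 hWne) (hC h)
  rw [Preconnected] at hpc
  push_neg at hpc
  obtain ⟨u, w, hR⟩ := hpc
  set A : Finset W := Finset.univ.filter (fun x => G'.Reachable u x) with hAdef
  have hmemA : ∀ x, x ∈ A ↔ G'.Reachable u x := by intro x; simp [hAdef]
  have hG'adj : ∀ x y : W, G'.Adj x y ↔ G.Adj x.1 y.1 := by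
    intro x y; rfl
  have hclosedA : ∀ a ∈ A, ∀ b, G'.Adj a b → b ∈ A := by
    intro a ha b hab
    exact (hmemA b).2 (((hmemA a).1 ha).trans hab.reachable)
  have hclosedB : ∀ a ∈ Aᶜ, ∀ b, G'.Adj a b → b ∈ Aᶜ := by
    intro a ha b hab
    rw [Finset.mem_compl] at ha ⊢
    exact fun hb => ha (hclosedA b hb a hab.symm)
  -- lower bound on cards
  have hlb : ∀ (T : Finset W), (∀ a ∈ T, ∀ b, G'.Adj a b → b ∈ T) →
      ∀ x ∈ T, n - 1 ≤ T.card := by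
    intro T hcl x hx
    have hsub : insert x.1 ((G.neighborFinset x.1).erase v) ⊆ T.image Subtype.val := by
      intro y hy
      rcases Finset.mem_insert.1 hy with rfl | hy
      · exact Finset.mem_image.2 ⟨x, hx, rfl⟩
      · obtain ⟨hyv, hyn⟩ := Finset.mem_erase.1 hy
        have hyW : y ∈ W := (hWmem y).2 hyv
        have : (⟨y, hyW⟩ : W) ∈ T :=
          hcl x hx ⟨y, hyW⟩ ((hG'adj _ _).2 ((mem_neighborFinset _ _ _).1 hyn))
        exact Finset.mem_image.2 ⟨_, this, rfl⟩
    have h1 := Finset.card_le_card hsub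
    have h2 : x.1 ∉ (G.neighborFinset x.1).erase v :=
      fun h => G.notMem_neighborFinset_self x.1 (Finset.mem_of_mem_erase h)
    rw [Finset.card_insert_of_notMem h2,
      Finset.card_image_of_injective _ Subtype.val_injective] at h1
    have h3 : (n - 1) - 1 ≤ ((G.neighborFinset x.1).erase v).card := by
      have := Finset.pred_card_le_card_erase (s := G.neighborFinset x.1) (a := v)
      rw [G.card_neighborFinset_eq_degree, hdeg] at this
      omega
    omega
  have hAcard := hlb A hclosedA u ((hmemA u).2 (Reachable.refl u))
  have hBcard := hlb Aᶜ hclosedB w (Finset.mem_compl.2 (fun h => hR ((hmemA w).1 h)))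
  have hsum : A.card + Aᶜ.card = 2 * n - 1 := by
    rw [Finset.card_add_card_compl, hWcard]
  -- one of them has card n - 1
  have hcase : A.card = n - 1 ∨ Aᶜ.card = n - 1 := by omega
  -- transfer to key2
  have main : ∀ (T : Finset W), (∀ a ∈ T, ∀ b, G'.Adj a b → b ∈ T) →
      T.card = n - 1 → False := by
    intro T hcl hTc
    set B : Finset V := T.image Subtype.val with hBdef
    have hvB : v ∉ B := by
      simp only [hBdef, Finset.mem_image]
      rintro ⟨x, hx, hxv⟩
      exact ((hWmem x.1).1 x.2) hxv
    have hBc : B.card = n - 1 := by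
      rw [hBdef, Finset.card_image_of_injective _ Subtype.val_injective, hTc]
    refine (key2 G hcard hdeg hn1 v B hvB hBc ?_).elim hnotiso.false
    intro a ha b hab
    obtain ⟨x, hx, rfl⟩ := Finset.mem_image.1 ha
    by_cases hbv : b = v
    · exact Or.inl hbv
    · refine Or.inr ?_
      have hbW : b ∈ W := (hWmem b).2 hbv
      have : (⟨b, hbW⟩ : W) ∈ T := hcl x hx ⟨b, hbW⟩ ((hG'adj _ _).2 hab)
      exact Finset.mem_image.2 ⟨_, this, rfl⟩
  rcases hcase with h | h
  · exact main A hclosedA h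
  · exact main Aᶜ hclosedB h
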